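/- There is no pair (f,g) of strictly positive continuous functions on [0,1] with f ≠ g satisfying (A₁f)(t) = g(t) and (A₁g)(t) = f(t) for all t ∈ [0,1], i.e. satisfying (Wf)(t)/(Wf)(0) = g(t) and (Wg)(t)/(Wg)(0) = f(t) for all t ∈ [0,1]. -/

import Mathlib

open Set MeasureTheory

/-- The linear integral operator `(W f)(t) = ∫₀¹ K(t,u) f(u) du`. -/
noncomputable def W (K : ℝ → ℝ → ℝ) (f : ℝ → ℝ) (t : ℝ) : ℝ :=
  ∫ u in (0:ℝ)..1, K t u * f u

theorem stmt_1
    (K : ℝ → ℝ → ℝ)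
    (hKcont : ContinuousOn (fun p : ℝ × ℝ => K p.1 p.2) (Icc 0 1 ×ˢ Icc 0 1))
    (hKpos : ∀ t ∈ Icc (0:ℝ) 1, ∀ u ∈ Icc (0:ℝ) 1, 0 < K t u) :
    ¬ ∃ f g : ℝ → ℝ,
      ContinuousOn f (Icc 0 1) ∧ ContinuousOn g (Icc 0 1) ∧
      (∀ t ∈ Icc (0:ℝ) 1, 0 < f t) ∧ (∀ t ∈ Icc (0:ℝ) 1, 0 < g t) ∧
      (∃ t ∈ Icc (0:ℝ) 1, f t ≠ g t) ∧
      (∀ t ∈ Icc (0:ℝ) 1, W K f t / W K f 0 = g t) ∧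
      (∀ t ∈ Icc (0:ℝ) 1, W K g t / W K g 0 = f t) := by
  rintro ⟨f, g, hf, hg, hfpos, hgpos, ⟨t0, ht0, hne⟩, h1, h2⟩
  have h01 : (0:ℝ) ∈ Icc (0:ℝ) 1 := ⟨le_refl 0, zero_le_one⟩
  -- continuity of the kernel slices
  have hKcont' : ∀ t ∈ Icc (0:ℝ) 1, ContinuousOn (fun u => K t u) (Icc 0 1) := by
    intro t ht
    have hpair : ContinuousOn (fun u : ℝ => ((t, u) : ℝ × ℝ)) (Icc 0 1) :=
      (continuous_const.prodMk continuous_id).continuousOn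
    exact hKcont.comp hpair (fun u hu => ⟨ht, hu⟩)
  have hI : ∀ h : ℝ → ℝ, ContinuousOn h (Icc 0 1) → ∀ t ∈ Icc (0:ℝ) 1,
      ContinuousOn (fun u => K t u * h u) (Icc 0 1) := by
    intro h hh t ht
    exact (hKcont' t ht).mul hh
  -- positivity of W on positive functions
  have hWpos : ∀ h : ℝ → ℝ, ContinuousOn h (Icc 0 1) → (∀ u ∈ Icc (0:ℝ) 1, 0 < h u) →
      ∀ t ∈ Icc (0:ℝ) 1, 0 < W K h t := by
    intro h hh hp t ht
    apply intervalIntegral.intervalIntegral_pos_of_pos_on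
      ((hI h hh t ht).intervalIntegrable_of_Icc zero_le_one)
    · intro u hu
      have hu' : u ∈ Icc (0:ℝ) 1 := Ioo_subset_Icc_self hu
      exact mul_pos (hKpos t ht u hu') (hp u hu')
    · exact zero_lt_one
  set a := W K f 0 with ha_def
  set b := W K g 0 with hb_def
  have ha : 0 < a := hWpos f hf hfpos 0 h01
  have hb : 0 < b := hWpos g hg hgpos 0 h01
  have hWf : ∀ t ∈ Icc (0:ℝ) 1, W K f t = g t * a := fun t ht =>
    (div_eq_iff ha.ne').mp (h1 t ht)
  have hWg : ∀ t ∈ Icc (0:ℝ) 1, W K g t = f t * b := fun t ht =>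
    (div_eq_iff hb.ne').mp (h2 t ht)
  have hg0 : g 0 = 1 := by
    have := h1 0 h01; rw [← ha_def, div_self ha.ne'] at this; exact this.symm
  have hf0 : f 0 = 1 := by
    have := h2 0 h01; rw [← hb_def, div_self hb.ne'] at this; exact this.symm
  -- maximum of f/g
  obtain ⟨ts, hts, hmax⟩ := isCompact_Icc.exists_isMaxOn (nonempty_Icc.mpr zero_le_one)
    (hf.div hg (fun u hu => (hgpos u hu).ne'))
  set M := f ts / g ts with hM_def
  have hM : 0 < M := div_pos (hfpos ts hts) (hgpos ts hts)
  have hfM : ∀ u ∈ Icc (0:ℝ) 1, f u ≤ M * g u := by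
    intro u hu
    have := hmax hu
    simpa [hM_def] using (div_le_iff₀ (hgpos u hu)).mp this
  have hfts : f ts = M * g ts := by
    rw [hM_def, div_mul_cancel₀ _ (hgpos ts hts).ne']
  -- key pointwise inequality: a * g u ≤ M * b * f u on [0,1]
  have hkey : ∀ u ∈ Icc (0:ℝ) 1, a * g u ≤ M * b * f u := by
    intro u hu
    have hle : W K f u ≤ W K (fun s => M * g s) u := by
      apply intervalIntegral.integral_mono_on zero_le_one
        ((hI f hf u hu).intervalIntegrable_of_Icc zero_le_one)
        ((hI (fun s => M * g s) (continuousOn_const.mul hg) u hu).intervalIntegrable_of_Icc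
          zero_le_one)
      intro s hs
      have := hfM s hs
      have hK := (hKpos u hu s hs).le
      nlinarith
    have hWMg : W K (fun s => M * g s) u = M * W K g u := by
      simp only [W]
      rw [← intervalIntegral.integral_const_mul]
      congr 1; ext s; ring
    rw [hWf u hu, hWMg, hWg u hu] at hle
    nlinarith
  -- equality of the integrals at ts
  have hint_eq : (∫ u in (0:ℝ)..1, K ts u * (a * g u)) =
      ∫ u in (0:ℝ)..1, K ts u * (M * b * f u) := by
    have e1 : (∫ u in (0:ℝ)..1, K ts u * (a * g u)) = a * W K g ts := by
      simp only [W]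
      rw [← intervalIntegral.integral_const_mul]
      congr 1; ext s; ring
    have e2 : (∫ u in (0:ℝ)..1, K ts u * (M * b * f u)) = M * b * W K f ts := by
      simp only [W]
      rw [← intervalIntegral.integral_const_mul]
      congr 1; ext s; ring
    rw [e1, e2, hWg ts hts, hWf ts hts, hfts]
    ring
  -- hence a * g = M * b * f everywhere on [0,1]
  have heq : ∀ u ∈ Icc (0:ℝ) 1, a * g u = M * b * f u := by
    by_contra hcon
    push_neg at hcon
    obtain ⟨u0, hu0, hne0⟩ := hcon
    have hlt : a * g u0 < M * b * f u0 := lt_of_le_of_ne (hkey u0 hu0) hne0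
    have : (∫ u in (0:ℝ)..1, K ts u * (a * g u)) <
        ∫ u in (0:ℝ)..1, K ts u * (M * b * f u) := by
      apply intervalIntegral.integral_lt_integral_of_continuousOn_of_le_of_exists_lt
        zero_lt_one
        ((hKcont' ts hts).mul (continuousOn_const.mul hg))
        ((hKcont' ts hts).mul (continuousOn_const.mul hf))
      · intro x hx
        have hx' : x ∈ Icc (0:ℝ) 1 := Ioc_subset_Icc_self hx
        have := hkey x hx'
        have hK := (hKpos ts hts x hx').le
        show K ts x * (a * g x) ≤ K ts x * (M * b * f x)
        nlinarith
      · exact ⟨u0, hu0, by show K ts u0 * (a * g u0) < K ts u0 * (M * b * f u0); nlinarith [hKpos ts hts u0 hu0]⟩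
    linarith [hint_eq]
  -- at u = 0 : a = M * b
  have haMb : a = M * b := by
    have := heq 0 h01
    rwa [hf0, hg0, mul_one, mul_one] at this
  -- hence f = g on [0,1]
  have : f t0 = g t0 := by
    have := heq t0 ht0
    rw [haMb] at this
    have hMb : 0 < M * b := mul_pos hM hb
    exact (mul_left_cancel₀ hMb.ne' this).symm
  exact hne this
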